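/- For every smooth path λ : [0,1] → X with sitting instants at its endpoints, the concatenation λ ⋆ λ̄ — where λ̄(t) = λ(1−t) and (λ ⋆ λ̄)(t) = λ(2t) for t ≤ 1/2, (λ ⋆ λ̄)(t) = λ̄(2t−1) for t ≥ 1/2 — is a smooth path, and it is rank-1 homotopic to the constant path at λ(0). -/

import Mathlib

/-!
STATEMENT 13: for a smooth path λ with sitting instants at its endpoints, λ ⋆ λ̄ is a
smooth path and is rank-1 homotopic to the constant path at λ(0).
-/

open scoped Manifold

noncomputable section

/-- A map `λ : ℝ → X` is a smooth path on `[0,1]` if it is `C^∞` on an open neighbourhood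
of `[0,1]`. -/
def SmoothOnUnitInterval {E HM : Type*} [NormedAddCommGroup E] [NormedSpace ℝ E]
    [TopologicalSpace HM] (IM : ModelWithCorners ℝ E HM)
    {X : Type*} [TopologicalSpace X] [ChartedSpace HM X] (lam : ℝ → X) : Prop :=
  ∃ U : Set ℝ, IsOpen U ∧ Set.Icc (0 : ℝ) 1 ⊆ U ∧ ContMDiffOn 𝓘(ℝ, ℝ) IM (⊤ : ℕ∞) lam U

/-- Rank-1 (thin) homotopy, with fixed endpoints, between two smooth paths `λ₁, λ₂` with
the same endpoints: a homotopy `K : [0,1] × [0,1] → X`, smooth on an open neighbourhood of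
its domain, fixing the endpoints, equal to `λ₁` for `s ∈ [0,ε)` and to `λ₂` for
`s ∈ (1-ε,1]`, and whose total differential has rank `≤ 1` at every point of its domain. -/
def Rank1Homotopic {E HM : Type*} [NormedAddCommGroup E] [NormedSpace ℝ E]
    [TopologicalSpace HM] (IM : ModelWithCorners ℝ E HM)
    {X : Type*} [TopologicalSpace X] [ChartedSpace HM X] (lam₁ lam₂ : ℝ → X) : Prop :=
  ∃ (K : ℝ × ℝ → X) (ε : ℝ), 0 < ε ∧
    (∃ U : Set (ℝ × ℝ), IsOpen U ∧ Set.Icc (0 : ℝ) 1 ×ˢ Set.Icc (0 : ℝ) 1 ⊆ U ∧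
        ContMDiffOn 𝓘(ℝ, ℝ × ℝ) IM (⊤ : ℕ∞) K U) ∧
    (∀ s ∈ Set.Icc (0 : ℝ) 1, K (s, 0) = lam₁ 0 ∧ K (s, 1) = lam₁ 1) ∧
    (∀ s ∈ Set.Icc (0 : ℝ) 1, ∀ t ∈ Set.Icc (0 : ℝ) 1, s < ε → K (s, t) = lam₁ t) ∧
    (∀ s ∈ Set.Icc (0 : ℝ) 1, ∀ t ∈ Set.Icc (0 : ℝ) 1, 1 - ε < s → K (s, t) = lam₂ t) ∧
    (∀ p ∈ Set.Icc (0 : ℝ) 1 ×ˢ Set.Icc (0 : ℝ) 1,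
        LinearMap.rank (mfderiv 𝓘(ℝ, ℝ × ℝ) IM K p).toLinearMap ≤ 1)

noncomputable def stepB (b u : ℝ) : ℝ :=
  Real.smoothTransition (u / b) - Real.smoothTransition (-u / b)

noncomputable def tauB (b t : ℝ) : ℝ := 1 - (2 * t - 1) * stepB b (2 * t - 1)

noncomputable def rhoF (s : ℝ) : ℝ := Real.smoothTransition (2 - 4 * s)

lemma stepB_contDiff (b : ℝ) : ContDiff ℝ ((⊤ : ℕ∞) : WithTop ℕ∞) (stepB b) := by
  unfold stepB
  exact (Real.smoothTransition.contDiff.comp (contDiff_id.div_const b)).sub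
    (Real.smoothTransition.contDiff.comp (contDiff_id.neg.div_const b))

lemma tauB_contDiff (b : ℝ) : ContDiff ℝ ((⊤ : ℕ∞) : WithTop ℕ∞) (tauB b) :=
  contDiff_const.sub (((contDiff_const.mul contDiff_id).sub contDiff_const).mul
    ((stepB_contDiff b).comp ((contDiff_const.mul contDiff_id).sub contDiff_const)))

lemma rhoF_contDiff : ContDiff ℝ ((⊤ : ℕ∞) : WithTop ℕ∞) rhoF := by
  unfold rhoF
  exact Real.smoothTransition.contDiff.comp
    (contDiff_const.sub (contDiff_const.mul contDiff_id))

lemma stepB_eq_neg_one {b u : ℝ} (hb : 0 < b) (h : u ≤ -b) : stepB b u = -1 := by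
  unfold stepB
  rw [Real.smoothTransition.zero_of_nonpos
        (div_nonpos_iff.mpr (Or.inr ⟨by linarith, hb.le⟩)),
      Real.smoothTransition.one_of_one_le ((le_div_iff₀ hb).mpr (by linarith))]
  ring

lemma stepB_eq_one {b u : ℝ} (hb : 0 < b) (h : b ≤ u) : stepB b u = 1 := by
  unfold stepB
  rw [Real.smoothTransition.one_of_one_le ((le_div_iff₀ hb).mpr (by linarith)),
      Real.smoothTransition.zero_of_nonpos
        (div_nonpos_iff.mpr (Or.inr ⟨by linarith, hb.le⟩))]
  ring

lemma abs_stepB_le_one (b u : ℝ) : |stepB b u| ≤ 1 := by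
  unfold stepB
  have h1 := Real.smoothTransition.nonneg (u / b)
  have h2 := Real.smoothTransition.le_one (u / b)
  have h3 := Real.smoothTransition.nonneg (-u / b)
  have h4 := Real.smoothTransition.le_one (-u / b)
  rw [abs_le]; constructor <;> linarith

lemma mul_stepB_nonneg {b : ℝ} (hb : 0 < b) (u : ℝ) : 0 ≤ u * stepB b u := by
  rcases le_or_gt 0 u with h | h
  · refine mul_nonneg h ?_
    have hz : Real.smoothTransition (-u / b) = 0 :=
      Real.smoothTransition.zero_of_nonpos
        (div_nonpos_iff.mpr (Or.inr ⟨by linarith, hb.le⟩))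
    have hnn := Real.smoothTransition.nonneg (u / b)
    unfold stepB
    rw [hz]; linarith
  · have hσ : stepB b u ≤ 0 := by
      unfold stepB
      rw [Real.smoothTransition.zero_of_nonpos
            (div_nonpos_iff.mpr (Or.inr ⟨by linarith, hb.le⟩))]
      have := Real.smoothTransition.nonneg (-u / b); linarith
    nlinarith

lemma mul_stepB_le_abs (b u : ℝ) : u * stepB b u ≤ |u| := by
  calc u * stepB b u ≤ |u * stepB b u| := le_abs_self _
    _ = |u| * |stepB b u| := abs_mul _ _
    _ ≤ |u| * 1 := mul_le_mul_of_nonneg_left (abs_stepB_le_one b u) (abs_nonneg u)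
    _ = |u| := mul_one _

/-- If `λ` is a smooth path with sitting instants at its endpoints, then
the concatenation `λ ⋆ λ̄` — given by `t ↦ λ(2t)` for `t ≤ 1/2` and `t ↦ λ̄(2t-1) = λ(2-2t)`
for `t ≥ 1/2` — is a smooth path, and it is rank-1 homotopic to the constant path at
`λ(0)`. -/
theorem concat_reverse_nullhomotopic {E HM : Type*} [NormedAddCommGroup E]
    [NormedSpace ℝ E] [TopologicalSpace HM] (IM : ModelWithCorners ℝ E HM)
    (X : Type*) [TopologicalSpace X] [ChartedSpace HM X] [IsManifold IM (⊤ : ℕ∞) X]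
    (lam : ℝ → X) (hlam : SmoothOnUnitInterval IM lam)
    (δ : ℝ) (hδ : 0 < δ)
    (hsit0 : ∀ t ∈ Set.Icc (0 : ℝ) δ, lam t = lam 0)
    (hsit1 : ∀ t ∈ Set.Icc (1 - δ : ℝ) 1, lam t = lam 1) :
    SmoothOnUnitInterval IM
      (fun t : ℝ => if t ≤ 1 / 2 then lam (2 * t) else lam (2 - 2 * t)) ∧
    Rank1Homotopic IM
      (fun t : ℝ => if t ≤ 1 / 2 then lam (2 * t) else lam (2 - 2 * t))
      (fun _ : ℝ => lam 0) := by
  obtain ⟨U, hUo, hUsub, hU⟩ := hlam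
  set b : ℝ := min (δ / 2) (1 / 2) with hbdef
  have hb : 0 < b := lt_min (by linarith) (by norm_num)
  have hbδ : b ≤ δ := (min_le_left _ _).trans (by linarith)
  have hb1 : b ≤ 1 / 2 := min_le_right _ _
  -- τ maps [0,1] to [0,1]
  have hτ01 : ∀ t ∈ Set.Icc (0 : ℝ) 1, tauB b t ∈ Set.Icc (0 : ℝ) 1 := by
    intro t ht
    have h1 := mul_stepB_nonneg hb (2 * t - 1)
    have h2 := mul_stepB_le_abs b (2 * t - 1)
    have habs : |2 * t - 1| ≤ 1 := abs_le.mpr ⟨by linarith [ht.1], by linarith [ht.2]⟩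
    exact ⟨by simp only [tauB]; linarith, by simp only [tauB]; linarith⟩
  -- key identity:  lam ∘ τ = concat
  have hkey : ∀ t : ℝ, lam (tauB b t) =
      (fun t : ℝ => if t ≤ 1 / 2 then lam (2 * t) else lam (2 - 2 * t)) t := by
    intro t
    simp only
    rcases le_or_gt (2 * t - 1) (-b) with h | h
    · have harg : tauB b t = 2 * t := by
        simp only [tauB, stepB_eq_neg_one hb h]; ring
      rw [harg, if_pos (by linarith : t ≤ 1 / 2)]
    · rcases le_or_gt b (2 * t - 1) with h' | h'
      · have harg : tauB b t = 2 - 2 * t := by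
          simp only [tauB, stepB_eq_one hb h']; ring
        rw [harg, if_neg (by intro hle; nlinarith : ¬ t ≤ 1 / 2)]
      · have h1 := mul_stepB_nonneg hb (2 * t - 1)
        have h2 := mul_stepB_le_abs b (2 * t - 1)
        have habs : |2 * t - 1| ≤ b := abs_le.mpr ⟨h.le, h'.le⟩
        have hτmem : tauB b t ∈ Set.Icc (1 - δ) 1 :=
          ⟨by simp only [tauB]; linarith, by simp only [tauB]; linarith⟩
        rw [hsit1 _ hτmem]
        by_cases ht2 : t ≤ 1 / 2
        · rw [if_pos ht2, hsit1 (2 * t) ⟨by linarith, by linarith⟩]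
        · push_neg at ht2
          rw [if_neg (not_le.mpr ht2), hsit1 (2 - 2 * t) ⟨by linarith, by linarith⟩]
  have hτcd := tauB_contDiff b
  have hτsm : ContMDiff 𝓘(ℝ, ℝ) 𝓘(ℝ, ℝ) (⊤ : ℕ∞) (tauB b) := hτcd.contMDiff
  constructor
  · refine ⟨tauB b ⁻¹' U, hUo.preimage hτcd.continuous,
      fun t ht => hUsub (hτ01 t ht), ?_⟩
    exact (hU.comp hτsm.contMDiffOn (fun x hx => hx)).congr fun t _ => (hkey t).symm
  · -- the homotopy
    set ψ : ℝ × ℝ → ℝ := fun p => rhoF p.1 * tauB b p.2 with hψdef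
    have hψcd : ContDiff ℝ ((⊤ : ℕ∞) : WithTop ℕ∞) ψ :=
      (rhoF_contDiff.comp contDiff_fst).mul (hτcd.comp contDiff_snd)
    have hρ01 : ∀ s : ℝ, rhoF s ∈ Set.Icc (0 : ℝ) 1 := fun s =>
      ⟨Real.smoothTransition.nonneg _, Real.smoothTransition.le_one _⟩
    have hψ01 : ∀ p ∈ Set.Icc (0 : ℝ) 1 ×ˢ Set.Icc (0 : ℝ) 1, ψ p ∈ Set.Icc (0 : ℝ) 1 := by
      intro p hp
      have h1 := hρ01 p.1
      have h2 := hτ01 p.2 hp.2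
      refine ⟨mul_nonneg h1.1 h2.1, ?_⟩
      show rhoF p.1 * tauB b p.2 ≤ 1
      nlinarith [h1.1, h1.2, h2.1, h2.2]
    have hτ0 : tauB b 0 = 0 := by
      have : (2 * (0:ℝ) - 1) ≤ -b := by linarith
      simp only [tauB, stepB_eq_neg_one hb this]; ring
    have hτ1 : tauB b 1 = 0 := by
      have : b ≤ 2 * (1:ℝ) - 1 := by linarith
      simp only [tauB, stepB_eq_one hb this]; ring
    refine ⟨fun p => lam (ψ p), 1 / 4, by norm_num,
      ⟨ψ ⁻¹' U, hUo.preimage hψcd.continuous, fun p hp => hUsub (hψ01 p hp),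
        hU.comp (hψcd.contMDiff.contMDiffOn) (fun x hx => hx)⟩, ?_, ?_, ?_, ?_⟩
    · intro s hs
      constructor
      · show lam (rhoF s * tauB b 0) = _
        rw [hτ0, mul_zero]
        norm_num
      · show lam (rhoF s * tauB b 1) = _
        rw [hτ1, mul_zero]
        norm_num
    · intro s hs t ht hlt
      have hρ1 : rhoF s = 1 :=
        Real.smoothTransition.one_of_one_le (by linarith)
      show lam (rhoF s * tauB b t) = _
      rw [hρ1, one_mul, hkey t]
    · intro s hs t ht hlt
      have hρ0 : rhoF s = 0 :=
        Real.smoothTransition.zero_of_nonpos (by linarith)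
      show lam (rhoF s * tauB b t) = _
      rw [hρ0, zero_mul]
    · intro p hp
      have hmem : ψ p ∈ U := hUsub (hψ01 p hp)
      have hl : MDifferentiableAt 𝓘(ℝ, ℝ) IM lam (ψ p) :=
        (hU.contMDiffAt (hUo.mem_nhds hmem)).mdifferentiableAt (by simp)
      have hψm : MDifferentiableAt 𝓘(ℝ, ℝ × ℝ) 𝓘(ℝ, ℝ) ψ p :=
        (hψcd.contMDiff (n := (⊤ : ℕ∞))).mdifferentiableAt (by simp)
      have hcomp : mfderiv 𝓘(ℝ, ℝ × ℝ) IM (lam ∘ ψ) p =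
          (mfderiv 𝓘(ℝ, ℝ) IM lam (ψ p)).comp (mfderiv 𝓘(ℝ, ℝ × ℝ) 𝓘(ℝ, ℝ) ψ p) :=
        mfderiv_comp p hl hψm
      show LinearMap.rank (mfderiv 𝓘(ℝ, ℝ × ℝ) IM (lam ∘ ψ) p).toLinearMap ≤ 1
      rw [hcomp]
      have h1 := LinearMap.lift_rank_comp_le_right
        (mfderiv 𝓘(ℝ, ℝ × ℝ) 𝓘(ℝ, ℝ) ψ p).toLinearMap
        (mfderiv 𝓘(ℝ, ℝ) IM lam (ψ p)).toLinearMap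
      rw [Cardinal.lift_uzero] at h1
      have h2 : LinearMap.rank (mfderiv 𝓘(ℝ, ℝ × ℝ) 𝓘(ℝ, ℝ) ψ p).toLinearMap ≤ 1 :=
        (LinearMap.rank_le_range _).trans (le_of_eq (Module.rank_self ℝ))
      rw [ContinuousLinearMap.toLinearMap_comp]
      exact h1.trans ((Cardinal.lift_le.mpr h2).trans (by simp))

end
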